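/- Let Γ be a finite connected simple graph in which every vertex has degree at least 2 (no free edges) and with genus g = |E(Γ)| − |V(Γ)| + 1 > 1. If Γ′ is a subgraph of Γ (a subset V′ ⊆ V(Γ) together with a set E′ of edges of Γ having both endpoints in V′) whose Euler characteristic satisfies χ(Γ′) = |V′| − |E′| = χ(Γ) = |V(Γ)| − |E(Γ)|, then Γ′ = Γ, i.e. V′ = V(Γ) and E′ = E(Γ). -/
import Mathlib

open Finset

lemma walk_crossing {V : Type*} (G : SimpleGraph V) (S : Finset V) [DecidableEq V] :
    ∀ {u v : V}, G.Walk u v → u ∉ S → v ∈ S →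
      ∃ a b, G.Adj a b ∧ a ∉ S ∧ b ∈ S := by
  intro u v w
  induction w with
  | nil => intro hu hv; exact absurd hv hu
  | @cons x y z h p ih =>
    intro hu hv
    by_cases hy : y ∈ S
    · exact ⟨x, y, h, hu, hy⟩
    · exact ih hy hv

theorem subgraph_eq_of_eulerChar_eq {V : Type*} [Fintype V] [DecidableEq V]
    (G : SimpleGraph V) [DecidableRel G.Adj]
    (hconn : G.Connected) (hdeg : ∀ v, 2 ≤ G.degree v)
    (g : ℕ) (hg : (g : ℤ) = (G.edgeFinset.card : ℤ) - (Fintype.card V : ℤ) + 1) (hg1 : 1 < g)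
    (V' : Finset V) (E' : Finset (Sym2 V))
    (hE' : E' ⊆ G.edgeFinset)
    (hends : ∀ e ∈ E', ∀ v ∈ e, v ∈ V')
    (hchi : (V'.card : ℤ) - (E'.card : ℤ)
      = (Fintype.card V : ℤ) - (G.edgeFinset.card : ℤ)) :
    V' = Finset.univ ∧ E' = G.edgeFinset := by
  classical
  set W : Finset V := V'ᶜ with hW
  set T : Finset (Sym2 V) := G.edgeFinset \ E' with hT
  have hWcard : W.card = Fintype.card V - V'.card := by
    simp [hW, Finset.card_compl]
  have hTcard : T.card = G.edgeFinset.card - E'.card := Finset.card_sdiff_of_subset hE'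
  have hVle : V'.card ≤ Fintype.card V := V'.card_le_univ
  have hEle : E'.card ≤ G.edgeFinset.card := Finset.card_le_card hE'
  -- From hchi, |W| = |T|
  have hWT : W.card = T.card := by
    rw [hWcard, hTcard]
    omega
  -- double counting
  have key : ∑ v ∈ W, G.degree v = ∑ e ∈ G.edgeFinset, (W.filter (fun v => v ∈ e)).card := by
    calc ∑ v ∈ W, G.degree v
        = ∑ v ∈ W, (G.edgeFinset.filter (fun e => v ∈ e)).card := by
          refine Finset.sum_congr rfl fun v _ => ?_
          rw [← G.card_incidenceFinset_eq_degree, G.incidenceFinset_eq_filter]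
      _ = ∑ v ∈ W, ∑ e ∈ G.edgeFinset, if v ∈ e then 1 else 0 :=
          Finset.sum_congr rfl fun v _ => Finset.card_filter _ _
      _ = ∑ e ∈ G.edgeFinset, ∑ v ∈ W, if v ∈ e then 1 else 0 := Finset.sum_comm
      _ = ∑ e ∈ G.edgeFinset, (W.filter (fun v => v ∈ e)).card :=
          Finset.sum_congr rfl fun e _ => (Finset.card_filter _ _).symm
  -- edges in E' contribute 0
  have hE'zero : ∀ e ∈ E', (W.filter (fun v => v ∈ e)).card = 0 := by
    intro e he
    rw [Finset.card_eq_zero, Finset.filter_eq_empty_iff]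
    intro v hv hve
    exact (Finset.mem_compl.mp hv) (hends e he v hve)
  have hsplit : ∑ e ∈ G.edgeFinset, (W.filter (fun v => v ∈ e)).card
      = ∑ e ∈ T, (W.filter (fun v => v ∈ e)).card := by
    rw [hT, ← Finset.sum_sdiff hE', Finset.sum_eq_zero hE'zero, add_zero]
  -- each edge contributes at most 2
  have hbound : ∀ e : Sym2 V, (W.filter (fun v => v ∈ e)).card ≤ 2 := by
    intro e
    induction e with
    | _ x y =>
      have : W.filter (fun v => v ∈ s(x, y)) ⊆ {x, y} := by
        intro v hv
        simp only [Finset.mem_filter, Sym2.mem_iff] at hv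
        simpa [Finset.mem_insert] using hv.2
      calc (W.filter (fun v => v ∈ s(x,y))).card ≤ ({x, y} : Finset V).card :=
            Finset.card_le_card this
        _ ≤ 2 := Finset.card_insert_le _ _ |>.trans (by simp)
  -- lower bound
  have hlow : 2 * W.card ≤ ∑ v ∈ W, G.degree v := by
    calc 2 * W.card = ∑ _v ∈ W, 2 := by rw [Finset.sum_const, smul_eq_mul, mul_comm]
      _ ≤ ∑ v ∈ W, G.degree v := Finset.sum_le_sum fun v _ => hdeg v
  have hup : ∑ e ∈ T, (W.filter (fun v => v ∈ e)).card ≤ 2 * T.card := by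
    calc ∑ e ∈ T, (W.filter (fun v => v ∈ e)).card ≤ ∑ _e ∈ T, 2 :=
          Finset.sum_le_sum fun e _ => hbound e
      _ = 2 * T.card := by rw [Finset.sum_const, smul_eq_mul, mul_comm]
  have heq : ∑ e ∈ T, (W.filter (fun v => v ∈ e)).card = 2 * T.card := by
    have h1 : 2 * T.card ≤ ∑ e ∈ T, (W.filter (fun v => v ∈ e)).card := by
      rw [← hWT] at *
      calc 2 * W.card ≤ ∑ v ∈ W, G.degree v := hlow
        _ = _ := by rw [key, hsplit]
    omega
  -- every edge of T has both endpoints in W; in particular no crossing edges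
  have hfull : ∀ e ∈ T, (W.filter (fun v => v ∈ e)).card = 2 := by
    by_contra hcon
    push_neg at hcon
    obtain ⟨e, he, hne⟩ := hcon
    have : ∑ e ∈ T, (W.filter (fun v => v ∈ e)).card < ∑ _e ∈ T, 2 :=
      Finset.sum_lt_sum (fun e _ => hbound e) ⟨e, he, lt_of_le_of_ne (hbound e) hne⟩
    rw [Finset.sum_const, smul_eq_mul, mul_comm] at this
    omega
  -- no edge crosses from V' to W
  have hnocross : ∀ a b : V, G.Adj a b → a ∉ W → b ∉ W := by
    intro a b hab ha hb
    have he : s(a, b) ∈ G.edgeFinset := by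
      rw [SimpleGraph.mem_edgeFinset]; exact hab
    have heT : s(a, b) ∈ T := by
      rw [hT, Finset.mem_sdiff]
      exact ⟨he, fun hE'' => (Finset.mem_compl.mp hb) (hends _ hE'' b (by simp))⟩
    have := hfull _ heT
    -- a ∈ filter since card = 2 means both endpoints in W
    have hsub : W.filter (fun v => v ∈ s(a, b)) ⊆ {a, b} := by
      intro v hv
      simp only [Finset.mem_filter, Sym2.mem_iff] at hv
      simpa [Finset.mem_insert] using hv.2
    have hcard2 : ({a, b} : Finset V).card ≤ 2 := Finset.card_insert_le _ _ |>.trans (by simp)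
    have : W.filter (fun v => v ∈ s(a, b)) = {a, b} :=
      Finset.eq_of_subset_of_card_le hsub (by omega)
    have ha' : a ∈ W.filter (fun v => v ∈ s(a, b)) := by
      rw [this]; simp
    exact ha (Finset.mem_filter.mp ha').1
  -- conclude W = ∅ or W = univ
  have hWe : W = ∅ := by
    by_contra hne
    obtain ⟨w, hw⟩ := Finset.nonempty_of_ne_empty hne
    have hWuniv : W ≠ Finset.univ := by
      intro h
      -- V' = ∅, hence E' = ∅
      have hV0 : V' = ∅ := by
        rw [hW] at h
        have := congrArg (·ᶜ) h
        simpa using this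
      have hE0 : E' = ∅ := by
        rw [Finset.eq_empty_iff_forall_notMem]
        intro e he
        induction e with
        | _ x y =>
          have := hends _ he x (by simp)
          simp [hV0] at this
      rw [hV0, hE0] at hchi
      simp only [Finset.card_empty, Nat.cast_zero, sub_zero] at hchi
      omega
    obtain ⟨u, hu⟩ : ∃ u, u ∉ W := by
      by_contra h
      push_neg at h
      exact hWuniv (Finset.eq_univ_iff_forall.mpr h)
    obtain ⟨p⟩ := hconn u w
    obtain ⟨a, b, hab, ha, hb⟩ := walk_crossing G W p hu hw
    exact hnocross a b hab ha hb
  have hV' : V' = Finset.univ := by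
    rw [hW] at hWe
    have := congrArg (·ᶜ) hWe
    simpa using this
  refine ⟨hV', ?_⟩
  have : E'.card = G.edgeFinset.card := by
    rw [hV', Finset.card_univ] at hchi
    omega
  exact Finset.eq_of_subset_of_card_le hE' (le_of_eq this.symm)
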